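/- Let C be a closed cone in the space Sym_d(ℝ) of real symmetric d×d matrices such that tr(h) > 0 for every nonzero h ∈ C. Then there exists a neighborhood W of 0 in Sym_d(ℝ) such that every nonzero h ∈ W ∩ C satisfies det(I_d + h) > 1. -/

import Mathlib

open Matrix Metric Set

attribute [local instance] Matrix.normedAddCommGroup Matrix.normedSpace

/-- Determinant as a continuous multilinear map in the rows. -/
noncomputable def detCMM (d : ℕ) :
    ContinuousMultilinearMap ℝ (fun _ : Fin d => (Fin d → ℝ)) ℝ :=
  MultilinearMap.mkContinuous
    (Matrix.detRowAlternating (R := ℝ) (n := Fin d)).toMultilinearMap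
    (Nat.factorial d)
    (by
      intro m
      have h1 : Matrix.detRowAlternating (R := ℝ) (n := Fin d) m
          = ∑ σ : Equiv.Perm (Fin d), Equiv.Perm.sign σ • ∏ i, m (σ i) i :=
        Matrix.det_apply (Matrix.of m)
      calc ‖Matrix.detRowAlternating (R := ℝ) (n := Fin d) m‖
          ≤ ∑ σ : Equiv.Perm (Fin d), ‖(Equiv.Perm.sign σ : ℤ) • ∏ i, m (σ i) i‖ := by
            rw [h1]; exact norm_sum_le _ _
        _ ≤ ∑ _σ : Equiv.Perm (Fin d), ∏ i, ‖m i‖ := by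
            apply Finset.sum_le_sum
            intro σ _
            have : ‖(Equiv.Perm.sign σ : ℤ) • ∏ i, m (σ i) i‖ = |∏ i, m (σ i) i| := by
              rcases Int.units_eq_one_or (Equiv.Perm.sign σ) with h | h <;>
                simp [h, Real.norm_eq_abs, Finset.abs_prod]
            rw [this, Finset.abs_prod]
            have : ∏ i, |m (σ i) i| ≤ ∏ i, ‖m (σ i)‖ := by
              apply Finset.prod_le_prod (fun _ _ => abs_nonneg _)
              intro i _
              exact norm_le_pi_norm (m (σ i)) i
            refine this.trans ?_
            rw [← Equiv.prod_comp σ (fun i => ‖m i‖)]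
        _ = (Nat.factorial d : ℝ) * ∏ i, ‖m i‖ := by
            rw [Finset.sum_const, Finset.card_univ, Fintype.card_perm, Fintype.card_fin,
              nsmul_eq_mul])

theorem detCMM_apply {d : ℕ} (m : Fin d → Fin d → ℝ) :
    detCMM d m = Matrix.det (Matrix.of m) := rfl

theorem det_updateRow_one {d : ℕ} (i : Fin d) (b : Fin d → ℝ) :
    ((1 : Matrix (Fin d) (Fin d) ℝ).updateRow i b).det = b i := by
  rw [← Matrix.det_transpose, ← Matrix.updateCol_transpose, Matrix.transpose_one,
    ← Matrix.cramer_apply, Matrix.cramer_one]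
  rfl


/-- Martinet, Lemma 3.4.4(2): if `C` is a closed cone of symmetric matrices whose
nonzero elements have positive trace, then near `0` every nonzero `h ∈ C` satisfies
`det(I + h) > 1`. -/
theorem det_one_add_gt_one_of_cone {d : ℕ}
    (C : Set (Matrix (Fin d) (Fin d) ℝ))
    (hCsymm : ∀ h ∈ C, h.IsSymm)
    (hCclosed : IsClosed C)
    (hCcone : ∀ h ∈ C, ∀ c : ℝ, 0 < c → c • h ∈ C)
    (hCtrace : ∀ h ∈ C, h ≠ 0 → 0 < h.trace) :
    ∃ W ∈ nhds (0 : Matrix (Fin d) (Fin d) ℝ),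
      ∀ h ∈ W ∩ C, h ≠ 0 → 1 < (1 + h).det := by
  classical
  set S : Set (Matrix (Fin d) (Fin d) ℝ) := C ∩ sphere 0 1 with hS
  set D : ℝ × Matrix (Fin d) (Fin d) ℝ → ℝ :=
    fun p => ∑ i, ((1 + p.1 • p.2).updateRow i (p.2 i)).det with hDdef
  have hDcont : Continuous D := by
    apply continuous_finset_sum
    intro i _
    apply Continuous.matrix_det
    apply continuous_matrix
    intro j k
    by_cases hji : j = i
    · subst hji
      simp only [Matrix.updateRow_apply, if_pos rfl]
      exact ((continuous_apply k).comp ((continuous_apply j).comp continuous_snd))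
    · simp only [Matrix.updateRow_apply, if_neg hji, Matrix.add_apply, Matrix.smul_apply,
        smul_eq_mul]
      exact continuous_const.add (continuous_fst.mul
        ((continuous_apply k).comp ((continuous_apply j).comp continuous_snd)))
  have hDeriv : ∀ (u : Matrix (Fin d) (Fin d) ℝ) (t : ℝ),
      HasDerivAt (fun s => (1 + s • u).det) (D (t, u)) t := by
    intro u t
    have hγ : HasDerivAt (fun s : ℝ => (fun i => (1 + s • u) i)) (fun i => u i) t := by
      rw [hasDerivAt_pi]
      intro i
      have he : (fun s : ℝ => (1 + s • u) i)
          = fun s : ℝ => s • (u i) + (1 : Matrix (Fin d) (Fin d) ℝ) i := by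
        funext s; funext j
        simp [Matrix.add_apply, Matrix.smul_apply, mul_comm]
        ring
      rw [he]
      simpa using ((hasDerivAt_id t).smul_const (u i)).add_const
        ((1 : Matrix (Fin d) (Fin d) ℝ) i)
    have h2 := ((detCMM d).hasFDerivAt (fun i => (1 + t • u) i)).comp_hasDerivAt t hγ
    convert h2 using 1
    · rfl
    · rfl
    · rfl
    simp only [ContinuousMultilinearMap.linearDeriv_apply]
    rfl
  have hD0 : ∀ u : Matrix (Fin d) (Fin d) ℝ, D (0, u) = u.trace := by
    intro u
    simp only [hDdef, zero_smul, add_zero, det_updateRow_one]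
    simp [Matrix.trace, Matrix.diag]
  rcases S.eq_empty_or_nonempty with hSe | hSne
  · refine ⟨univ, Filter.univ_mem, ?_⟩
    intro h hh hne
    exfalso
    have hpos : (0:ℝ) < ‖h‖ := norm_pos_iff.mpr hne
    have hu : ‖h‖⁻¹ • h ∈ S := by
      refine ⟨hCcone h hh.2 _ (inv_pos.mpr hpos), ?_⟩
      rw [mem_sphere_zero_iff_norm, norm_smul, norm_inv, norm_norm,
        inv_mul_cancel₀ hpos.ne']
    rw [hSe] at hu
    exact hu
  · have hScpt : IsCompact S :=
      ((isCompact_sphere (0 : Matrix (Fin d) (Fin d) ℝ) 1).inter_left hCclosed)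
    have hTcpt : IsCompact (Icc (0:ℝ) 1 ×ˢ S) := isCompact_Icc.prod hScpt
    set A : Set (ℝ × Matrix (Fin d) (Fin d) ℝ) :=
      (Icc (0:ℝ) 1 ×ˢ S) ∩ D ⁻¹' Iic 0 with hAdef
    have hAcpt : IsCompact A := hTcpt.inter_right (isClosed_Iic.preimage hDcont)
    have hA0 : ∀ p ∈ A, 0 < p.1 := by
      rintro ⟨t, u⟩ ⟨⟨⟨ht0, ht1⟩, huS⟩, hDle⟩
      rcases lt_or_eq_of_le ht0 with hp | hp
      · exact hp
      · exfalso
        have hune : u ≠ 0 := by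
          intro h0
          have := mem_sphere_zero_iff_norm.mp huS.2
          rw [h0, norm_zero] at this
          norm_num at this
        have htr : 0 < u.trace := hCtrace u huS.1 hune
        rw [← hD0 u] at htr
        have ht : t = 0 := hp.symm
        subst ht
        simp only [Set.mem_preimage, Set.mem_Iic] at hDle
        linarith
    obtain ⟨δ, hδpos, hδ1, hkey⟩ :
        ∃ δ : ℝ, 0 < δ ∧ δ ≤ 1 ∧ ∀ u ∈ S, ∀ t : ℝ, 0 ≤ t → t < δ → 0 < D (t, u) := by
      rcases A.eq_empty_or_nonempty with hAe | hAne
      · refine ⟨1, one_pos, le_refl 1, fun u hu t ht0 ht1 => ?_⟩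
        by_contra hc
        have : (t, u) ∈ A := ⟨⟨⟨ht0, ht1.le⟩, hu⟩, not_lt.mp hc⟩
        rw [hAe] at this
        exact this
      · obtain ⟨p, hpA, hmin⟩ := hAcpt.exists_isMinOn hAne continuous_fst.continuousOn
        refine ⟨min p.1 1, lt_min (hA0 p hpA) one_pos, min_le_right _ _, ?_⟩
        intro u hu t ht0 htδ
        by_contra hc
        have hmem : (t, u) ∈ A :=
          ⟨⟨⟨ht0, htδ.le.trans (min_le_right _ _)⟩, hu⟩, not_lt.mp hc⟩
        have hle : p.1 ≤ t := hmin hmem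
        exact absurd htδ (not_lt.mpr ((min_le_left _ _).trans hle))
    refine ⟨ball 0 δ, ball_mem_nhds _ hδpos, ?_⟩
    intro h hh hne
    have hC : h ∈ C := hh.2
    have hlt : ‖h‖ < δ := by
      have := hh.1
      rwa [mem_ball, dist_zero_right] at this
    have hpos : (0:ℝ) < ‖h‖ := norm_pos_iff.mpr hne
    set u : Matrix (Fin d) (Fin d) ℝ := ‖h‖⁻¹ • h with hu
    have huS : u ∈ S := by
      refine ⟨hCcone h hC _ (inv_pos.mpr hpos), ?_⟩
      rw [mem_sphere_zero_iff_norm, hu, norm_smul, norm_inv, norm_norm,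
        inv_mul_cancel₀ hpos.ne']
    set g : ℝ → ℝ := fun s => (1 + s • u).det with hgdef
    have hmono : StrictMonoOn g (Icc 0 ‖h‖) := by
      apply strictMonoOn_of_deriv_pos (convex_Icc _ _)
      · exact fun s _ => (hDeriv u s).differentiableAt.continuousAt.continuousWithinAt
      · intro s hs
        rw [interior_Icc] at hs
        rw [(hDeriv u s).deriv]
        exact hkey u huS s hs.1.le (hs.2.trans hlt)
    have h01 : g 0 < g ‖h‖ :=
      hmono (left_mem_Icc.mpr hpos.le) (right_mem_Icc.mpr hpos.le) hpos
    have hg0 : g 0 = 1 := by simp [hgdef]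
    have hgh : g ‖h‖ = (1 + h).det := by
      rw [hgdef]
      have : ‖h‖ • u = h := by
        rw [hu, smul_smul, mul_inv_cancel₀ hpos.ne', one_smul]
      simp only [this]
    rw [← hgh, ← hg0]
    exact h01
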